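/- The generalized intersection problem of recognizable relations with the suffix relation is decidable for arbitrary intersection patterns. Precisely: for every k : ℕ, the predicate P on triples (m, Renc, I) — m : ℕ, Renc : List (List E) where E is the type of encoded NFAs over Fin k, and I : List (ℕ × ℕ) — defined by: P(m, Renc, I) ↔ every member of Renc has length m, every (i,j) ∈ I satisfies i < m and j < m, and there exists ws : List (List (Fin k)) with ws.length = m such that for some ℓ ∈ Renc, for every t < m the NFA ℓ.get t accepts ws.get t, and for every (i,j) ∈ I the word ws.get i is a suffix (List.IsSuffix) of ws.get j — is computable: ComputablePred P. -/

import Mathlib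

/-- An encoded NFA over alphabet `β`: a list of transitions, an initial state,
and a list of final states. -/
abbrev EncNFA (β : Type) : Type := List (ℕ × β × ℕ) × ℕ × List ℕ

/-- Acceptance of a word by an encoded NFA. -/
def encAccepts {β : Type} (M : EncNFA β) (u : List β) : Prop :=
  ∃ r : List ℕ, ∃ hr : r.length = u.length + 1,
    r.head? = some M.2.1 ∧
    (∃ qf ∈ M.2.2, r.getLast? = some qf) ∧
    ∀ i, ∀ hi : i < u.length,
      (r.get ⟨i, by omega⟩, u.get ⟨i, hi⟩, r.get ⟨i + 1, by omega⟩) ∈ M.1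

/-- The convolution `w ⊗ w'` of two words. -/
def conv {A : Type} (w w' : List A) : List (Option A × Option A) :=
  (List.range (max w.length w'.length)).map fun k => (w[k]?, w'[k]?)

namespace GIS

def tuplesOf {α : Type} (L : List α) : ℕ → List (List α)
  | 0 => [[]]
  | n+1 => L.flatMap fun a => (tuplesOf L n).map (a :: ·)

lemma mem_tuplesOf {α} {L : List α} : ∀ {n : ℕ} {r : List α},
    r ∈ tuplesOf L n ↔ r.length = n ∧ ∀ a ∈ r, a ∈ L := by
  intro n
  induction n with
  | zero => intro r; simp [tuplesOf, List.length_eq_zero_iff]; rintro rfl; simp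
  | succ n ih =>
    intro r
    cases r with
    | nil => simp [tuplesOf]
    | cons a r =>
      simp only [tuplesOf, List.mem_flatMap, List.mem_map, List.length_cons,
        List.mem_cons, Nat.add_right_cancel_iff, forall_eq_or_imp]
      constructor
      · rintro ⟨b, hb, w, hw, heq⟩
        injection heq with e1 e2
        subst e1; subst e2
        obtain ⟨h1, h2⟩ := ih.1 hw
        exact ⟨h1, hb, h2⟩
      · rintro ⟨hlen, ha, hmem⟩
        exact ⟨a, ha, r, ih.2 ⟨hlen, hmem⟩, rfl⟩

lemma length_pos_tuplesOf {α} (L : List α) (n : ℕ) : 0 < (tuplesOf L n).length → True := by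
  intro; trivial

def statesList {β : Type} (M : EncNFA β) : List ℕ :=
  M.2.1 :: (M.1.map (·.1) ++ M.1.map (·.2.2) ++ M.2.2)

def IsRun {β : Type} (M : EncNFA β) (u : List β) (r : List ℕ) : Prop :=
  r.length = u.length + 1 ∧ r.head? = some M.2.1 ∧
    (∃ qf ∈ M.2.2, r.getLast? = some qf) ∧
    ∀ i, ∀ _ : i < u.length, (r.getD i 0, u[i], r.getD (i+1) 0) ∈ M.1

lemma encAccepts_iff {β} {M : EncNFA β} {u : List β} :
    encAccepts M u ↔ ∃ r, IsRun M u r := by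
  constructor
  · rintro ⟨r, hr, h1, h2, h3⟩
    refine ⟨r, hr, h1, h2, fun i hi => ?_⟩
    have := h3 i hi
    rwa [List.get_eq_getElem, List.get_eq_getElem, List.get_eq_getElem,
      ← List.getD_eq_getElem r 0 (by omega), ← List.getD_eq_getElem r 0 (by omega)] at this
  · rintro ⟨r, hr, h1, h2, h3⟩
    refine ⟨r, hr, h1, h2, fun i hi => ?_⟩
    have := h3 i hi
    rw [List.getD_eq_getElem r 0 (by omega), List.getD_eq_getElem r 0 (by omega)] at this
    simpa [List.get_eq_getElem] using this

lemma IsRun.mem_statesList {β} {M : EncNFA β} {u : List β} {r : List ℕ}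
    (h : IsRun M u r) : ∀ q ∈ r, q ∈ statesList M := by
  obtain ⟨hlen, hhead, _, htr⟩ := h
  intro q hq
  obtain ⟨i, hi, rfl⟩ := List.getElem_of_mem hq
  rcases Nat.eq_zero_or_pos i with rfl | hpos
  · have : r.head? = some r[0] := by
      cases r with
      | nil => simp at hlen
      | cons a r => simp
    rw [this] at hhead
    simp [statesList, ← Option.some_inj.1 hhead]
  · obtain ⟨j, rfl⟩ : ∃ j, i = j + 1 := ⟨i - 1, by omega⟩
    have hj : j < u.length := by omega
    have := htr j hj
    rw [List.getD_eq_getElem r 0 (by omega), List.getD_eq_getElem r 0 (by omega)] at this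
    have : r[j+1] ∈ M.1.map (fun t => t.2.2) := List.mem_map.2 ⟨_, this, rfl⟩
    simp only [statesList, List.mem_cons, List.mem_append]
    exact Or.inr (Or.inl (Or.inr this))
def accB (δ : List (ℕ × ℕ × ℕ)) (q0 : ℕ) (F : List ℕ) (u : List ℕ) : Bool :=
  (tuplesOf (q0 :: (δ.map (·.1) ++ δ.map (·.2.2) ++ F)) (u.length + 1)).any fun r =>
    decide (r.head? = some q0) &&
    (F.any fun qf => decide (r.getLast? = some qf)) &&
    ((List.range u.length).all fun i =>
      δ.any fun tr => decide (tr = (r.getD i 0, u.getD i 0, r.getD (i+1) 0)))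

def encTriple {k : ℕ} (t : ℕ × Fin k × ℕ) : ℕ × ℕ × ℕ := (t.1, t.2.1.val, t.2.2)

def nfaAcc {k : ℕ} (M : EncNFA (Fin k)) (u : List (Fin k)) : Bool :=
  accB (M.1.map encTriple) M.2.1 M.2.2 (u.map Fin.val)

lemma base_eq {k : ℕ} (M : EncNFA (Fin k)) :
    M.2.1 :: ((M.1.map encTriple).map (·.1) ++ (M.1.map encTriple).map (·.2.2) ++ M.2.2)
      = statesList M := by
  simp [statesList, List.map_map, encTriple, Function.comp_def]

lemma nfaAcc_iff {k : ℕ} (M : EncNFA (Fin k)) (u : List (Fin k)) :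
    nfaAcc M u = true ↔ encAccepts M u := by
  rw [encAccepts_iff]
  unfold nfaAcc accB
  rw [List.any_eq_true]
  constructor
  · rintro ⟨r, hrmem, hb⟩
    simp only [Bool.and_eq_true, List.all_eq_true, List.any_eq_true, decide_eq_true_eq,
      List.mem_range] at hb
    obtain ⟨⟨h1, h2⟩, h3⟩ := hb
    obtain ⟨hlen, -⟩ := mem_tuplesOf.1 hrmem
    refine ⟨r, ⟨by simpa using hlen, h1, h2, ?_⟩⟩
    intro i hi
    obtain ⟨tr, htr, he⟩ := h3 i (by simpa using hi)
    obtain ⟨⟨a, b, c⟩, ht0, rfl⟩ := List.mem_map.1 htr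
    have hu : (u.map Fin.val).getD i 0 = (u[i] : Fin k).val := by
      rw [show (0:ℕ) = ((0 : Fin k.succ).val) from rfl] at *
      rw [List.getD_eq_getElem _ _ (by simpa using hi)]
      simp
    rw [hu] at he
    simp only [encTriple, Prod.mk.injEq] at he
    obtain ⟨e1, e2, e3⟩ := he
    have : b = u[i] := Fin.val_injective e2
    subst this
    rw [← e1, ← e3]
    exact ht0
  · rintro ⟨r, hlen, h1, h2, h3⟩
    refine ⟨r, ?_, ?_⟩
    · rw [base_eq]
      exact mem_tuplesOf.2 ⟨by simpa using hlen, IsRun.mem_statesList ⟨hlen, h1, h2, h3⟩⟩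
    · simp only [Bool.and_eq_true, List.all_eq_true, List.any_eq_true, decide_eq_true_eq,
        List.mem_range]
      refine ⟨⟨h1, h2⟩, ?_⟩
      intro i hi
      rw [List.length_map] at hi
      refine ⟨encTriple (r.getD i 0, u[i], r.getD (i+1) 0), List.mem_map.2 ⟨_, h3 i hi, rfl⟩, ?_⟩
      simp only [encTriple]
      congr 1
      congr 1
      rw [List.getD_eq_getElem _ _ (by simpa using hi)]
      simp

def sufB {α : Type} [DecidableEq α] (u v : List α) : Bool :=
  decide (v.drop (v.length - u.length) = u)

lemma sufB_iff {α : Type} [DecidableEq α] (u v : List α) : sufB u v = true ↔ u <:+ v := by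
  simp only [sufB, decide_eq_true_eq]
  constructor
  · intro h; rw [← h]; exact List.drop_suffix _ _
  · intro h; exact (List.suffix_iff_eq_drop.1 h).symm

lemma suffix_of_suffix_length_le {α : Type} {l₁ l₂ l₃ : List α}
    (h1 : l₁ <:+ l₃) (h2 : l₂ <:+ l₃) (h : l₁.length ≤ l₂.length) : l₁ <:+ l₂ := by
  rw [← List.reverse_prefix] at h1 h2 ⊢
  exact List.prefix_of_prefix_length_le h1 h2 (by simpa using h)

def cutW {α : Type} (p p' : ℕ) (w : List α) : List α :=
  if p' ≤ w.length then w.take (w.length - p') ++ w.drop (w.length - p) else w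

lemma cutW_length_le {α : Type} {p p' : ℕ} (hp : p ≤ p') (w : List α) :
    (cutW p p' w).length ≤ w.length := by
  unfold cutW; split <;> simp <;> omega

lemma cutW_length_lt {α : Type} {p p' : ℕ} (hp : p < p') {w : List α} (hw : p' ≤ w.length) :
    (cutW p p' w).length < w.length := by
  unfold cutW; rw [if_pos hw]; simp; omega

lemma cutW_inactive {α : Type} {p p' : ℕ} {w : List α} (hw : w.length < p') :
    cutW p p' w = w := by
  unfold cutW; rw [if_neg (by omega)]

lemma cutW_nil {α : Type} {p p' : ℕ} (hp' : 1 ≤ p') : cutW p p' ([] : List α) = [] := by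
  simp [cutW]

lemma cutW_suffix {α : Type} {p p' : ℕ} (hp : 1 ≤ p) (hpp' : p < p') {u v : List α}
    (huv : u <:+ v) (hu : u.length < p ∨ p' ≤ u.length) (hv : v.length < p ∨ p' ≤ v.length) :
    cutW p p' u <:+ cutW p p' v := by
  rcases hv with hv | hv
  · have h1 := huv.length_le
    rw [cutW_inactive (by omega), cutW_inactive (by omega)]
    exact huv
  · rcases hu with hu | hu
    · rw [cutW_inactive (by omega)]
      unfold cutW; rw [if_pos hv]
      have hd : v.drop (v.length - p) <:+ v := List.drop_suffix _ _
      have hlen : u.length ≤ (v.drop (v.length - p)).length := by simp; omega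
      exact (suffix_of_suffix_length_le huv hd hlen).trans (List.suffix_append _ _)
    · obtain ⟨x, rfl⟩ := huv
      unfold cutW
      rw [if_pos hu, if_pos hv]
      have e1 : (x ++ u).length - p' = x.length + (u.length - p') := by simp; omega
      have e2 : (x ++ u).length - p = x.length + (u.length - p) := by
        simp at hv ⊢; omega
      rw [e1, e2, List.take_append, List.drop_append, List.append_assoc]
      exact ⟨x, by simp [List.take_of_length_le, List.drop_eq_nil_of_le]⟩

lemma getD0_of_getElem? {l : List ℕ} {i v : ℕ} (h : l[i]? = some v) : l.getD i 0 = v := by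
  rw [List.getD_eq_getElem?_getD, h]; rfl

lemma IsRun.cut {β : Type} {M : EncNFA β} {u : List β} {r : List ℕ} (h : IsRun M u r)
    {p p' : ℕ} (hp : 1 ≤ p) (hpp' : p < p') (hp'u : p' ≤ u.length)
    (heq : r.getD (u.length - p') 0 = r.getD (u.length - p) 0) :
    IsRun M (cutW p p' u) (r.take (u.length - p' + 1) ++ r.drop (u.length - p + 1)) := by
  obtain ⟨hlen, hhead, ⟨qf, hqf, hlast⟩, htr⟩ := h
  set n := u.length with hn
  set A := n - p' with hA
  set B := n - p with hB
  have hAB : A < B := by omega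
  have hBn : B + 1 ≤ n := by omega
  have hcut : cutW p p' u = u.take A ++ u.drop B := by rw [cutW, if_pos hp'u]
  set r' := r.take (A + 1) ++ r.drop (B + 1) with hr'
  have hlen' : r'.length = A + 1 + p := by
    simp [hr', hlen]; omega
  have hulen' : (cutW p p' u).length = A + p := by
    rw [hcut]; simp; omega
  have hq : ∀ i, i ≤ A → r'[i]? = r[i]? := by
    intro i hi
    rw [hr', List.getElem?_append_left (by simp [hlen]; omega), List.getElem?_take,
      if_pos (by omega)]
  have hq2 : ∀ i, A + 1 ≤ i → r'[i]? = r[B + 1 + (i - (A + 1))]? := by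
    intro i hi
    rw [hr', List.getElem?_append_right (by simp [hlen]; omega), List.getElem?_drop]
    congr 1
    simp [hlen]
    omega
  have hu1 : ∀ i, i < A → (cutW p p' u)[i]? = u[i]? := by
    intro i hi
    rw [hcut, List.getElem?_append_left (by simp; omega), List.getElem?_take, if_pos (by omega)]
  have hu2 : ∀ i, A ≤ i → (cutW p p' u)[i]? = u[B + (i - A)]? := by
    intro i hi
    rw [hcut, List.getElem?_append_right (by simp; omega), List.getElem?_drop]
    congr 1
    simp
    omega
  refine ⟨by rw [hulen', hlen']; omega, ?_, ⟨qf, hqf, ?_⟩, ?_⟩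
  · rw [List.head?_eq_getElem?] at hhead ⊢
    rw [hq 0 (by omega)]
    exact hhead
  · rw [List.getLast?_eq_getElem?] at hlast ⊢
    rw [hlen', show A + 1 + p - 1 = A + p from by omega,
      hq2 (A + p) (by omega), show B + 1 + (A + p - (A + 1)) = n from by omega]
    rwa [hlen, show n + 1 - 1 = n from by omega] at hlast
  · intro i hi
    rw [hulen'] at hi
    rcases Nat.lt_or_ge i A with hiA | hiA
    · have hiu : i < u.length := by omega
      have e1 : r'.getD i 0 = r.getD i 0 := by
        rw [List.getD_eq_getElem?_getD, List.getD_eq_getElem?_getD, hq i (by omega)]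
      have e2 : r'.getD (i+1) 0 = r.getD (i+1) 0 := by
        rw [List.getD_eq_getElem?_getD, List.getD_eq_getElem?_getD, hq (i+1) (by omega)]
      have e3 : (cutW p p' u)[i]'(by omega) = u[i]'hiu := by
        have h1 := List.getElem?_eq_getElem (l := cutW p p' u) (i := i) (by omega)
        rw [hu1 i hiA, List.getElem?_eq_getElem hiu] at h1
        exact (Option.some.inj h1).symm
      rw [e1, e2, e3]
      exact htr i hiu
    · set j := i - A with hj
      have hjp : j < p := by omega
      have hBj : B + j < n := by omega
      have e3 : (cutW p p' u)[i]'(by omega) = u[B + j]'(by omega) := by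
        have h1 := List.getElem?_eq_getElem (l := cutW p p' u) (i := i) (by omega)
        rw [hu2 i hiA, List.getElem?_eq_getElem (show B + (i - A) < u.length from by omega)] at h1
        exact (Option.some.inj h1).symm
      have e1 : r'.getD i 0 = r.getD (B + j) 0 := by
        rcases Nat.eq_or_lt_of_le hiA with hEq | hlt
        · have hj0 : j = 0 := by omega
          rw [hj0, Nat.add_zero, List.getD_eq_getElem?_getD, hq i (by omega),
            ← List.getD_eq_getElem?_getD, ← hEq]
          exact heq
        · rw [List.getD_eq_getElem?_getD, hq2 i (by omega), ← List.getD_eq_getElem?_getD]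
          congr 1
          omega
      have e2 : r'.getD (i+1) 0 = r.getD (B + j + 1) 0 := by
        rw [List.getD_eq_getElem?_getD, hq2 (i+1) (by omega), ← List.getD_eq_getElem?_getD]
        congr 1
        omega
      rw [e1, e2, e3]
      exact htr (B + j) hBj
def dN (k : ℕ) : EncNFA (Fin k) := ([], 0, [])

def Sol {k : ℕ} (m : ℕ) (l : List (EncNFA (Fin k))) (I : List (ℕ × ℕ))
    (ws : List (List (Fin k))) : Prop :=
  ws.length = m ∧ (∀ t, t < m → encAccepts (l.getD t (dN k)) (ws.getD t [])) ∧
  ∀ q ∈ I, (ws.getD q.1 []).IsSuffix (ws.getD q.2 [])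

def allConfigs (S : List ℕ) (m : ℕ) : List (List (Option ℕ)) :=
  tuplesOf ((none : Option ℕ) :: S.map some) m

lemma shrink {k m : ℕ} {l : List (EncNFA (Fin k))} {I : List (ℕ × ℕ)} {S : List ℕ}
    (hl : l.length = m)
    (hS : ∀ M ∈ l, ∀ q ∈ statesList M, q ∈ S)
    {ws : List (List (Fin k))} (hsol : Sol m l I ws)
    {w0 : List (Fin k)} (hw0 : w0 ∈ ws) (hbig : (allConfigs S m).length < w0.length) :
    ∃ ws', Sol m l I ws' ∧ (ws'.map List.length).sum < (ws.map List.length).sum := by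
  obtain ⟨hwm, hacc, hsuf⟩ := hsol
  have hex : ∀ t : ℕ, ∃ r, t < m → IsRun (l.getD t (dN k)) (ws.getD t []) r := by
    intro t
    by_cases h : t < m
    · obtain ⟨r, hr⟩ := encAccepts_iff.1 (hacc t h)
      exact ⟨r, fun _ => hr⟩
    · exact ⟨[], fun hc => absurd hc h⟩
  choose rs hrs using hex
  set L := w0.length with hL
  set cfg : ℕ → List (Option ℕ) := fun p => (List.range m).map fun t =>
    if p ≤ (ws.getD t []).length then some ((rs t).getD ((ws.getD t []).length - p) 0) else none
    with hcfg
  have hmem : ∀ p ∈ Finset.Icc 1 L, cfg p ∈ (allConfigs S m).toFinset := by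
    intro p hp
    rw [List.mem_toFinset]
    refine mem_tuplesOf.2 ⟨by simp [hcfg], ?_⟩
    intro a ha
    obtain ⟨t, ht, rfl⟩ := List.mem_map.1 ha
    have htm : t < m := by simpa using List.mem_range.1 ht
    by_cases hact : p ≤ (ws.getD t []).length
    · rw [if_pos hact]
      have hrun := hrs t htm
      have hp1 : 1 ≤ p := (Finset.mem_Icc.1 hp).1
      have hidx : (ws.getD t []).length - p < (rs t).length := by
        rw [hrun.1]; omega
      rw [List.getD_eq_getElem _ _ hidx]
      have hst : (rs t)[(ws.getD t []).length - p] ∈ statesList (l.getD t (dN k)) :=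
        hrun.mem_statesList _ (List.getElem_mem hidx)
      have hMl : l.getD t (dN k) ∈ l := by
        rw [List.getD_eq_getElem _ _ (by omega)]
        exact List.getElem_mem (by omega)
      simp only [List.mem_cons, List.mem_map]
      exact Or.inr ⟨_, hS _ hMl _ hst, rfl⟩
    · rw [if_neg hact]
      simp
  have hcard : (allConfigs S m).toFinset.card < (Finset.Icc 1 L).card := by
    rw [Nat.card_Icc]
    have := List.toFinset_card_le (allConfigs S m)
    omega
  obtain ⟨a, ha, b, hb, hab, hfab⟩ :=
    Finset.exists_ne_map_eq_of_card_lt_of_maps_to hcard hmem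
  obtain ⟨p, p', hpp', hp1, hp'L, hcfgeq⟩ :
      ∃ p p', p < p' ∧ 1 ≤ p ∧ p' ≤ L ∧ cfg p = cfg p' := by
    rcases lt_or_gt_of_ne hab with h | h
    · exact ⟨a, b, h, (Finset.mem_Icc.1 ha).1, (Finset.mem_Icc.1 hb).2, hfab⟩
    · exact ⟨b, a, h, (Finset.mem_Icc.1 hb).1, (Finset.mem_Icc.1 ha).2, hfab.symm⟩
  have hdich : ∀ t, t < m → (ws.getD t []).length < p ∨
      (p' ≤ (ws.getD t []).length ∧
        (rs t).getD ((ws.getD t []).length - p') 0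
          = (rs t).getD ((ws.getD t []).length - p) 0) := by
    intro t ht
    have h1 : (cfg p)[t]? = (cfg p')[t]? := by rw [hcfgeq]
    rw [hcfg] at h1
    simp only [List.getElem?_map, List.getElem?_range ht, Option.map_some] at h1
    have h2 := Option.some.inj h1
    by_cases hc1 : p ≤ (ws.getD t []).length
    · by_cases hc2 : p' ≤ (ws.getD t []).length
      · rw [if_pos hc1, if_pos hc2] at h2
        exact Or.inr ⟨hc2, (Option.some.inj h2).symm⟩
      · rw [if_pos hc1, if_neg hc2] at h2
        exact absurd h2 (by simp)
    · exact Or.inl (by omega)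
  have hcase : ∀ i, (ws.getD i []).length < p ∨ p' ≤ (ws.getD i []).length := by
    intro i
    by_cases h : i < m
    · rcases hdich i h with h' | h'
      · exact Or.inl h'
      · exact Or.inr h'.1
    · left
      rw [List.getD_eq_default _ _ (by omega)]
      simp
      omega
  refine ⟨ws.map (cutW p p'), ⟨by simp [hwm], ?_, ?_⟩, ?_⟩
  · intro t ht
    have hget : (ws.map (cutW p p')).getD t [] = cutW p p' (ws.getD t []) := by
      by_cases h : t < ws.length
      · rw [List.getD_eq_getElem _ _ (by simpa using h), List.getElem_map,
          List.getD_eq_getElem _ _ h]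
      · rw [List.getD_eq_default _ _ (by simp; omega), List.getD_eq_default _ _ (by omega),
          cutW_nil (by omega)]
    rw [hget]
    rcases hdich t ht with h' | ⟨h1', h2'⟩
    · rw [cutW_inactive (by omega)]
      exact hacc t ht
    · exact encAccepts_iff.2 ⟨_, (hrs t ht).cut hp1 hpp' h1' h2'⟩
  · intro q hq
    have hget : ∀ i, (ws.map (cutW p p')).getD i [] = cutW p p' (ws.getD i []) := by
      intro i
      by_cases h : i < ws.length
      · rw [List.getD_eq_getElem _ _ (by simpa using h), List.getElem_map,
          List.getD_eq_getElem _ _ h]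
      · rw [List.getD_eq_default _ _ (by simp; omega), List.getD_eq_default _ _ (by omega),
          cutW_nil (by omega)]
    rw [hget, hget]
    exact cutW_suffix hp1 hpp' (hsuf q hq) (hcase q.1) (hcase q.2)
  · rw [List.map_map]
    refine List.sum_lt_sum _ _ (fun w hw => cutW_length_le (le_of_lt hpp') w) ⟨w0, hw0, ?_⟩
    exact cutW_length_lt hpp' (by omega)

lemma small_sol {k m : ℕ} {l : List (EncNFA (Fin k))} {I : List (ℕ × ℕ)} {S : List ℕ}
    (hl : l.length = m)
    (hS : ∀ M ∈ l, ∀ q ∈ statesList M, q ∈ S) :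
    ∀ N (ws : List (List (Fin k))), (ws.map List.length).sum ≤ N → Sol m l I ws →
      ∃ ws', Sol m l I ws' ∧ ∀ w ∈ ws', w.length ≤ (allConfigs S m).length := by
  intro N
  induction N using Nat.strong_induction_on with
  | _ N ih =>
    intro ws hsum hsol
    by_cases hbig : ∀ w ∈ ws, w.length ≤ (allConfigs S m).length
    · exact ⟨ws, hsol, hbig⟩
    · push_neg at hbig
      obtain ⟨w0, hw0, hlen⟩ := hbig
      obtain ⟨ws', hsol', hlt⟩ := shrink hl hS hsol hw0 hlen
      have hpos : 0 < (ws.map List.length).sum := by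
        have : w0.length ≤ (ws.map List.length).sum := List.single_le_sum (by simp) _ (List.mem_map.2 ⟨w0, hw0, rfl⟩)
        omega
      exact ih ((ws'.map List.length).sum) (by omega) ws' le_rfl hsol'
def allS {k : ℕ} (x : ℕ × List (List (EncNFA (Fin k))) × List (ℕ × ℕ)) : List ℕ :=
  (x.2.1.flatten.map statesList).flatten

def bound {k : ℕ} (x : ℕ × List (List (EncNFA (Fin k))) × List (ℕ × ℕ)) : ℕ :=
  (allConfigs (allS x) x.1).length

def wordsUpTo (k N : ℕ) : List (List (Fin k)) :=
  (List.range (N+1)).flatMap fun n => tuplesOf (List.finRange k) n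

lemma mem_wordsUpTo {k N : ℕ} {w : List (Fin k)} : w ∈ wordsUpTo k N ↔ w.length ≤ N := by
  simp only [wordsUpTo, List.mem_flatMap, List.mem_range]
  constructor
  · rintro ⟨n, hn, hw⟩
    have := (mem_tuplesOf.1 hw).1
    omega
  · intro h
    exact ⟨w.length, by omega, mem_tuplesOf.2 ⟨rfl, fun a _ => List.mem_finRange a⟩⟩

def decider (k : ℕ) (x : ℕ × List (List (EncNFA (Fin k))) × List (ℕ × ℕ)) : Bool :=
  (x.2.1.all fun l => decide (l.length = x.1)) &&
  (x.2.2.all fun q => decide (q.1 < x.1) && decide (q.2 < x.1)) &&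
  ((tuplesOf (wordsUpTo k (bound x)) x.1).any fun ws =>
    x.2.1.any fun l =>
      ((List.range x.1).all fun t => nfaAcc (l.getD t (dN k)) (ws.getD t [])) &&
      (x.2.2.all fun q => sufB (ws.getD q.1 []) (ws.getD q.2 [])))

lemma decider_iff (k : ℕ) (x : ℕ × List (List (EncNFA (Fin k))) × List (ℕ × ℕ)) :
    decider k x = true ↔
      ((∀ l ∈ x.2.1, l.length = x.1) ∧
      (∀ p ∈ x.2.2, p.1 < x.1 ∧ p.2 < x.1) ∧
      ∃ ws : List (List (Fin k)), ws.length = x.1 ∧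
        ∃ l ∈ x.2.1,
          (∀ t, ∀ htw : t < ws.length, ∀ htl : t < l.length,
            encAccepts (l.get ⟨t, htl⟩) (ws.get ⟨t, htw⟩)) ∧
          ∀ p ∈ x.2.2, ∀ hi : p.1 < ws.length, ∀ hj : p.2 < ws.length,
            (ws.get ⟨p.1, hi⟩).IsSuffix (ws.get ⟨p.2, hj⟩)) := by
  obtain ⟨m, R, I⟩ := x
  simp only [decider, Bool.and_eq_true, List.all_eq_true, List.any_eq_true,
    decide_eq_true_eq, List.mem_range]
  constructor
  · rintro ⟨⟨hA, hB⟩, ws, hws, l, hlR, hacc, hsuf⟩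
    have hwsl := (mem_tuplesOf.1 hws).1
    refine ⟨hA, fun q hq => ⟨(hB q hq).1, (hB q hq).2⟩, ws, hwsl, l, hlR, ?_, ?_⟩
    · intro t htw htl
      have htm : t < m := by omega
      have := (nfaAcc_iff _ _).1 (hacc t htm)
      rwa [List.getD_eq_getElem l (dN k) htl, List.getD_eq_getElem ws [] htw] at this
    · intro q hq hi hj
      have := (sufB_iff _ _).1 (hsuf q hq)
      rwa [List.getD_eq_getElem ws [] hi, List.getD_eq_getElem ws [] hj] at this
  · rintro ⟨hA, hB, ws, hws, l, hlR, hacc, hsuf⟩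
    refine ⟨⟨hA, fun q hq => ⟨(hB q hq).1, (hB q hq).2⟩⟩, ?_⟩
    have hlm : l.length = m := hA l hlR
    have hsol : Sol m l I ws := by
      refine ⟨hws, ?_, ?_⟩
      · intro t ht
        have h1 := hacc t (by omega) (by omega)
        rwa [List.get_eq_getElem, List.get_eq_getElem,
          ← List.getD_eq_getElem l (dN k) (by omega), ← List.getD_eq_getElem ws [] (by omega)] at h1
      · intro q hq
        have h1 := hsuf q hq (by
          have := (hB q hq).1; omega) (by have := (hB q hq).2; omega)
        rwa [List.get_eq_getElem, List.get_eq_getElem,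
          ← List.getD_eq_getElem ws [] (by have := (hB q hq).1; omega),
          ← List.getD_eq_getElem ws [] (by have := (hB q hq).2; omega)] at h1
    have hS : ∀ M ∈ l, ∀ q ∈ statesList M, q ∈ allS (m, R, I) := by
      intro M hM q hq
      simp only [allS, List.mem_flatten, List.mem_map]
      exact ⟨statesList M, ⟨M, ⟨l, hlR, hM⟩, rfl⟩, hq⟩
    obtain ⟨ws', hsol', hsmall⟩ :=
      small_sol hlm hS ((ws.map List.length).sum) ws le_rfl hsol
    obtain ⟨hws', hacc', hsuf'⟩ := hsol'
    refine ⟨ws', mem_tuplesOf.2 ⟨hws', fun w hw => mem_wordsUpTo.2 (hsmall w hw)⟩,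
      l, hlR, ?_, ?_⟩
    · intro t ht
      exact (nfaAcc_iff _ _).2 (hacc' t ht)
    · intro q hq
      exact (sufB_iff _ _).2 (hsuf' q hq)
section PrimrecPart

open Primrec

variable {α β : Type} [Primcodable α] [Primcodable β]

lemma primrec_all {f : α → List β} {p : α → β → Bool}
    (hf : Primrec f) (hp : Primrec₂ p) : Primrec fun a => (f a).all (p a) := by
  have key : ∀ (l : List β) (q : β → Bool), l.all q = l.foldr (fun b r => q b && r) true := by
    intro l q
    induction l with
    | nil => rfl
    | cons a l ih => simp [List.all_cons, ih]
  have H := Primrec.list_foldr (h := fun (a : α) (q : β × Bool) => p a q.1 && q.2) hf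
    (Primrec.const true)
    (Primrec₂.mk (Primrec.and.comp (hp.comp Primrec.fst (Primrec.fst.comp Primrec.snd))
      (Primrec.snd.comp Primrec.snd)))
  exact H.of_eq fun a => (key (f a) (p a)).symm

lemma primrec_any {f : α → List β} {p : α → β → Bool}
    (hf : Primrec f) (hp : Primrec₂ p) : Primrec fun a => (f a).any (p a) := by
  have key : ∀ (l : List β) (q : β → Bool), l.any q = l.foldr (fun b r => q b || r) false := by
    intro l q
    induction l with
    | nil => rfl
    | cons a l ih => simp [List.any_cons, ih]
  have H := Primrec.list_foldr (h := fun (a : α) (q : β × Bool) => p a q.1 || q.2) hf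
    (Primrec.const false)
    (Primrec₂.mk (Primrec.or.comp (hp.comp Primrec.fst (Primrec.fst.comp Primrec.snd))
      (Primrec.snd.comp Primrec.snd)))
  exact H.of_eq fun a => (key (f a) (p a)).symm

lemma primrec_drop : Primrec₂ fun (l : List β) (n : ℕ) => l.drop n := by
  have key : ∀ (n : ℕ) (l : List β), List.tail^[n] l = l.drop n := by
    intro n
    induction n with
    | zero => simp
    | succ n ih =>
      intro l
      rw [Function.iterate_succ_apply', ih, List.tail_drop]
  apply Primrec₂.mk
  exact (Primrec.nat_iterate Primrec.snd Primrec.fst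
    (Primrec₂.mk (Primrec.list_tail.comp Primrec.snd))).of_eq fun p => key _ _

lemma primrec_statesList : Primrec (statesList (β := β)) := by
  unfold statesList
  exact Primrec.list_cons.comp (Primrec.fst.comp Primrec.snd)
    (Primrec.list_append.comp
      (Primrec.list_append.comp
        (Primrec.list_map Primrec.fst (Primrec₂.mk (Primrec.fst.comp Primrec.snd)))
        (Primrec.list_map Primrec.fst
          (Primrec₂.mk (Primrec.snd.comp (Primrec.snd.comp Primrec.snd)))))
      (Primrec.snd.comp Primrec.snd))

lemma primrec_tuplesOf {L : α → List β} {n : α → ℕ}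
    (hL : Primrec L) (hn : Primrec n) : Primrec fun a => tuplesOf (L a) (n a) := by
  have step : Primrec₂ fun (a : α) (q : ℕ × List (List β)) =>
      (L a).flatMap fun b => q.2.map (b :: ·) := by
    apply Primrec₂.mk
    apply Primrec.list_flatMap (hL.comp Primrec.fst)
    apply Primrec₂.mk
    apply Primrec.list_map (Primrec.snd.comp (Primrec.snd.comp Primrec.fst))
    exact Primrec₂.mk (Primrec.list_cons.comp (Primrec.snd.comp Primrec.fst) Primrec.snd)
  refine (Primrec.nat_rec' hn (Primrec.const ([[]] : List (List β))) step).of_eq fun a => ?_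
  generalize n a = N
  induction N with
  | zero => rfl
  | succ N ih => simp [tuplesOf, ih]

lemma primrec_accB : Primrec₂ fun (E : EncNFA ℕ) (u : List ℕ) => accB E.1 E.2.1 E.2.2 u := by
  apply Primrec₂.mk
  unfold accB
  apply primrec_any (primrec_tuplesOf (primrec_statesList.comp Primrec.fst)
    (Primrec.succ.comp (Primrec.list_length.comp Primrec.snd)))
  apply Primrec₂.mk
  apply Primrec.and.comp
  · apply Primrec.and.comp
    · exact (Primrec.eq.comp (Primrec.list_head?.comp Primrec.snd)
        (Primrec.option_some.comp (Primrec.fst.comp (Primrec.snd.comp (Primrec.fst.comp Primrec.fst))))).decide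
    · apply primrec_any (Primrec.snd.comp (Primrec.snd.comp (Primrec.fst.comp (Primrec.fst))))
      apply Primrec₂.mk
      have hgl : Primrec fun (z : ((EncNFA ℕ × List ℕ) × List ℕ) × ℕ) => z.1.2.getLast? :=
        (Primrec.list_head?.comp (Primrec.list_reverse.comp (Primrec.snd.comp Primrec.fst))).of_eq
          fun z => (List.getLast?_eq_head?_reverse).symm
      exact (Primrec.eq.comp hgl (Primrec.option_some.comp Primrec.snd)).decide
  · apply primrec_all
      (Primrec.list_range.comp (Primrec.list_length.comp (Primrec.snd.comp Primrec.fst)))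
    apply Primrec₂.mk
    apply primrec_any (Primrec.fst.comp (Primrec.fst.comp (Primrec.fst.comp Primrec.fst)))
    apply Primrec₂.mk
    -- context z : ((((EncNFA ℕ × List ℕ) × List ℕ) × ℕ) × (ℕ × ℕ × ℕ))
    -- z.1.1.1.1 : EncNFA ℕ × List ℕ (E, u); z.1.1.2 : r; z.1.2 : i; z.2 : tr
    have hr : Primrec fun (z : ((((EncNFA ℕ × List ℕ) × List ℕ) × ℕ) × (ℕ × ℕ × ℕ))) => z.1.1.2 :=
      Primrec.snd.comp (Primrec.fst.comp Primrec.fst)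
    have hu : Primrec fun (z : ((((EncNFA ℕ × List ℕ) × List ℕ) × ℕ) × (ℕ × ℕ × ℕ))) => z.1.1.1.2 :=
      Primrec.snd.comp (Primrec.fst.comp (Primrec.fst.comp Primrec.fst))
    have hi : Primrec fun (z : ((((EncNFA ℕ × List ℕ) × List ℕ) × ℕ) × (ℕ × ℕ × ℕ))) => z.1.2 :=
      Primrec.snd.comp Primrec.fst
    exact (Primrec.eq.comp Primrec.snd
      (Primrec.pair ((Primrec.list_getD 0).comp hr hi)
        (Primrec.pair ((Primrec.list_getD 0).comp hu hi)
          ((Primrec.list_getD 0).comp hr (Primrec.succ.comp hi))))).decide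

variable {k : ℕ}

lemma primrec_encTriple : Primrec (encTriple (k := k)) := by
  unfold encTriple
  exact Primrec.pair Primrec.fst
    (Primrec.pair (Primrec.fin_val.comp (Primrec.fst.comp Primrec.snd))
      (Primrec.snd.comp Primrec.snd))

lemma primrec_nfaAcc : Primrec₂ fun (M : EncNFA (Fin k)) (u : List (Fin k)) => nfaAcc M u := by
  apply Primrec₂.mk
  unfold nfaAcc
  have hE : Primrec fun (z : EncNFA (Fin k) × List (Fin k)) =>
      ((z.1.1.map encTriple, z.1.2.1, z.1.2.2) : EncNFA ℕ) :=
    Primrec.pair (Primrec.list_map (Primrec.fst.comp Primrec.fst)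
        (Primrec₂.mk (primrec_encTriple.comp Primrec.snd)))
      (Primrec.pair (Primrec.fst.comp (Primrec.snd.comp Primrec.fst))
        (Primrec.snd.comp (Primrec.snd.comp Primrec.fst)))
  have hu : Primrec fun (z : EncNFA (Fin k) × List (Fin k)) => z.2.map Fin.val :=
    Primrec.list_map Primrec.snd (Primrec₂.mk (Primrec.fin_val.comp Primrec.snd))
  exact primrec_accB.comp hE hu

lemma primrec_sufB : Primrec₂ fun (u v : List (Fin k)) => sufB u v := by
  apply Primrec₂.mk
  unfold sufB
  exact (Primrec.eq.comp
    (primrec_drop.comp Primrec.snd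
      (Primrec.nat_sub.comp (Primrec.list_length.comp Primrec.snd)
        (Primrec.list_length.comp Primrec.fst)))
    Primrec.fst).decide

abbrev Inp (k : ℕ) := ℕ × List (List (EncNFA (Fin k))) × List (ℕ × ℕ)

lemma primrec_allS : Primrec (allS (k := k)) := by
  unfold allS
  exact Primrec.list_flatten.comp
    (Primrec.list_map (Primrec.list_flatten.comp (Primrec.fst.comp Primrec.snd))
      (Primrec₂.mk (primrec_statesList.comp Primrec.snd)))

lemma primrec_bound : Primrec (bound (k := k)) := by
  unfold bound allConfigs
  exact Primrec.list_length.comp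
    (primrec_tuplesOf
      (Primrec.list_cons.comp (Primrec.const none)
        (Primrec.list_map primrec_allS (Primrec₂.mk (Primrec.option_some.comp Primrec.snd))))
      Primrec.fst)

lemma primrec_wordsUpTo : Primrec fun (N : ℕ) => wordsUpTo k N := by
  unfold wordsUpTo
  apply Primrec.list_flatMap (Primrec.list_range.comp Primrec.succ)
  exact Primrec₂.mk (primrec_tuplesOf (Primrec.const (List.finRange k)) Primrec.snd)

lemma primrec_decider : Primrec (decider k) := by
  unfold decider
  apply Primrec.and.comp
  apply Primrec.and.comp
  · apply primrec_all (Primrec.fst.comp Primrec.snd)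
    exact Primrec₂.mk (Primrec.eq.comp (Primrec.list_length.comp Primrec.snd)
      (Primrec.fst.comp Primrec.fst)).decide
  · apply primrec_all (Primrec.snd.comp Primrec.snd)
    apply Primrec₂.mk
    exact Primrec.and.comp
      (Primrec.nat_lt.comp (Primrec.fst.comp Primrec.snd) (Primrec.fst.comp Primrec.fst)).decide
      (Primrec.nat_lt.comp (Primrec.snd.comp Primrec.snd) (Primrec.fst.comp Primrec.fst)).decide
  · apply primrec_any (primrec_tuplesOf (primrec_wordsUpTo.comp primrec_bound) Primrec.fst)
    apply Primrec₂.mk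
    -- z : Inp k × List (List (Fin k)); z.1 = x, z.2 = ws
    apply primrec_any (Primrec.fst.comp (Primrec.snd.comp Primrec.fst))
    apply Primrec₂.mk
    -- w : (Inp k × List (List (Fin k))) × List (EncNFA (Fin k)); w.1.1 = x, w.1.2 = ws, w.2 = l
    apply Primrec.and.comp
    · apply primrec_all (Primrec.list_range.comp (Primrec.fst.comp (Primrec.fst.comp Primrec.fst)))
      apply Primrec₂.mk
      -- v : ((Inp k × List (List (Fin k))) × List (EncNFA (Fin k))) × ℕ
      exact primrec_nfaAcc.comp
        ((Primrec.list_getD (dN k)).comp (Primrec.snd.comp Primrec.fst) Primrec.snd)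
        ((Primrec.list_getD ([] : List (Fin k))).comp
          (Primrec.snd.comp (Primrec.fst.comp Primrec.fst)) Primrec.snd)
    · apply primrec_all (Primrec.snd.comp (Primrec.snd.comp (Primrec.fst.comp Primrec.fst)))
      apply Primrec₂.mk
      -- v : ((Inp k × List (List (Fin k))) × List (EncNFA (Fin k))) × (ℕ × ℕ)
      exact primrec_sufB.comp
        ((Primrec.list_getD ([] : List (Fin k))).comp
          (Primrec.snd.comp (Primrec.fst.comp Primrec.fst)) (Primrec.fst.comp Primrec.snd))
        ((Primrec.list_getD ([] : List (Fin k))).comp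
          (Primrec.snd.comp (Primrec.fst.comp Primrec.fst)) (Primrec.snd.comp Primrec.snd))

end PrimrecPart

end GIS

/-- The generalized intersection problem of recognizable relations with the
suffix relation is decidable for arbitrary intersection patterns. -/
theorem genInt_rec_suffix_decidable (k : ℕ) :
    ComputablePred fun x : ℕ × List (List (EncNFA (Fin k))) × List (ℕ × ℕ) =>
      (∀ l ∈ x.2.1, l.length = x.1) ∧
      (∀ p ∈ x.2.2, p.1 < x.1 ∧ p.2 < x.1) ∧
      ∃ ws : List (List (Fin k)), ws.length = x.1 ∧
        ∃ l ∈ x.2.1,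
          (∀ t, ∀ htw : t < ws.length, ∀ htl : t < l.length,
            encAccepts (l.get ⟨t, htl⟩) (ws.get ⟨t, htw⟩)) ∧
          ∀ p ∈ x.2.2, ∀ hi : p.1 < ws.length, ∀ hj : p.2 < ws.length,
            (ws.get ⟨p.1, hi⟩).IsSuffix (ws.get ⟨p.2, hj⟩) := by
  rw [ComputablePred.computable_iff]
  refine ⟨GIS.decider k, GIS.primrec_decider.to_comp, ?_⟩
  funext x
  exact propext (Iff.symm (GIS.decider_iff k x))
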